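/- For a tree A with two vertices r ≤ c (proximity matrix [[1,-1],[0,1]]) and any numbering (n_1, n_2), suppose the Saito dicriticity satisfies: the dicriticity Δ = (Δ_1, Δ_2) is admissible, meaning (i) if Δ_i = 0 then ε_i ≥ 2 - Σ_{neighbors j of i} Δ_j, and (ii) if Δ_i = 1 then ε_i ≥ n_i, where ε = (n/2) - P·□ with □_i = δ_i/2 - ⌊Δ_i, 1/2⌋_{ν_i - δ_i}, ν = P⁻¹ n, δ_1 = 0, δ_2 = Δ_1. Then for each numbering (n_1, n_2) there exists exactly one admissible dicriticity in {0,1}². -/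

import Mathlib

/-- `pairSel a b k` equals `a` if `k` is even and `b` if `k` is odd. -/
def pairSel (a b : ℚ) (k : ℤ) : ℚ := if Even k then a else b

section TwoVertexTree

variable (n1 n2 : ℕ) (Δ : Fin 2 → ℤ)

/-- Valuations for the two-vertex tree: ν₁ = n₁ + n₂, ν₂ = n₂. -/
def nu1 : ℤ := (n1 : ℤ) + n2
def nu2 : ℤ := (n2 : ℤ)

/-- Square index at the root (δ₁ = 0). -/
noncomputable def sq1 : ℚ := (0 : ℚ) / 2 - pairSel (Δ 0 : ℚ) (1/2) (nu1 n1 n2 - 0)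

/-- Square index at the child (δ₂ = Δ₁). -/
noncomputable def sq2 : ℚ := (Δ 0 : ℚ) / 2 - pairSel (Δ 1 : ℚ) (1/2) (nu2 n2 - Δ 0)

/-- Configuration ε = (n/2) - P·□ for P = [[1,-1],[0,1]]. -/
noncomputable def eps1 : ℚ := (n1 : ℚ) / 2 - sq1 n1 n2 Δ + sq2 n2 Δ
noncomputable def eps2 : ℚ := (n2 : ℚ) / 2 - sq2 n2 Δ

/-- Admissibility of the dicriticity Δ for the two-vertex tree. -/
noncomputable def admTwo : Prop :=
  (Δ 0 = 0 → eps1 n1 n2 Δ ≥ 2 - (Δ 1 : ℚ)) ∧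
  (Δ 0 = 1 → eps1 n1 n2 Δ ≥ (n1 : ℚ)) ∧
  (Δ 1 = 0 → eps2 n2 Δ ≥ 2 - (Δ 0 : ℚ)) ∧
  (Δ 1 = 1 → eps2 n2 Δ ≥ (n2 : ℚ))

/-- integer versions of the (doubled) square-index contributions -/
def myT1 (m1 m2 : ℕ) (d0 : ℤ) : ℤ := if Even ((m1:ℤ) + (m2:ℤ)) then 2*d0 else 1
def myT2 (m2 : ℕ) (d0 d1 : ℤ) : ℤ := if Even ((m2:ℤ) - d0) then 2*d1 else 1

def myQ (m1 m2 : ℕ) (d0 d1 : ℤ) : Prop :=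
  (d0 = 0 → (m1:ℤ) + myT1 m1 m2 d0 + d0 - myT2 m2 d0 d1 ≥ 4 - 2*d1) ∧
  (d0 = 1 → (m1:ℤ) + myT1 m1 m2 d0 + d0 - myT2 m2 d0 d1 ≥ 2*m1) ∧
  (d1 = 0 → (m2:ℤ) - d0 + myT2 m2 d0 d1 ≥ 4 - 2*d0) ∧
  (d1 = 1 → (m2:ℤ) - d0 + myT2 m2 d0 d1 ≥ 2*m2)

lemma half_ge (x y : ℤ) : ((x:ℚ)/2 ≥ (y:ℚ)) ↔ x ≥ 2*y := by
  rw [ge_iff_le, le_div_iff₀ (by norm_num : (0:ℚ) < 2), ge_iff_le]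
  norm_cast
  omega

lemma eps1_eq (m1 m2 : ℕ) (d0 d1 : ℤ) :
    eps1 m1 m2 ![d0, d1] = (((m1:ℤ) + myT1 m1 m2 d0 + d0 - myT2 m2 d0 d1 : ℤ) : ℚ)/2 := by
  simp only [eps1, sq1, sq2, pairSel, nu1, nu2, myT1, myT2, Matrix.cons_val_zero,
    Matrix.cons_val_one, Matrix.head_cons, sub_zero]
  split_ifs <;> push_cast at * <;> simp only [*, if_true, if_false, not_false_eq_true] <;> ring

lemma eps2_eq (m2 : ℕ) (d0 d1 : ℤ) :
    eps2 m2 ![d0, d1] = (((m2:ℤ) - d0 + myT2 m2 d0 d1 : ℤ) : ℚ)/2 := by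
  simp only [eps2, sq2, pairSel, nu2, myT2, Matrix.cons_val_zero,
    Matrix.cons_val_one, Matrix.head_cons]
  split_ifs <;> push_cast at * <;> simp only [*, if_true, if_false, not_false_eq_true] <;> ring

lemma adm_iff (m1 m2 : ℕ) (d0 d1 : ℤ) :
    admTwo m1 m2 ![d0, d1] ↔ myQ m1 m2 d0 d1 := by
  simp only [admTwo, myQ, eps1_eq, eps2_eq, Matrix.cons_val_zero, Matrix.cons_val_one,
    Matrix.head_cons]
  constructor <;> rintro ⟨h1, h2, h3, h4⟩ <;>
    refine ⟨fun h => ?_, fun h => ?_, fun h => ?_, fun h => ?_⟩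
  · have := h1 h; rw [show ((2:ℚ) - (d1:ℚ)) = (((2 - d1 : ℤ)):ℚ) by push_cast; ring,
      half_ge] at this; omega
  · have := h2 h; rw [show ((m1:ℚ)) = (((m1:ℤ)):ℚ) by push_cast; ring, half_ge] at this; omega
  · have := h3 h; rw [show ((2:ℚ) - (d0:ℚ)) = (((2 - d0 : ℤ)):ℚ) by push_cast; ring,
      half_ge] at this; omega
  · have := h4 h; rw [show ((m2:ℚ)) = (((m2:ℤ)):ℚ) by push_cast; ring, half_ge] at this; omega
  · rw [show ((2:ℚ) - (d1:ℚ)) = (((2 - d1 : ℤ)):ℚ) by push_cast; ring, half_ge]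
    have := h1 h; omega
  · rw [show ((m1:ℚ)) = (((m1:ℤ)):ℚ) by push_cast; ring, half_ge]; have := h2 h; omega
  · rw [show ((2:ℚ) - (d0:ℚ)) = (((2 - d0 : ℤ)):ℚ) by push_cast; ring, half_ge]
    have := h3 h; omega
  · rw [show ((m2:ℚ)) = (((m2:ℤ)):ℚ) by push_cast; ring, half_ge]; have := h4 h; omega

lemma eta_pair (Δ : Fin 2 → ℤ) : Δ = ![Δ 0, Δ 1] := by
  funext i; fin_cases i <;> simp

/-- For the two-vertex tree and any numbering (n₁, n₂) there exists exactly one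
admissible dicriticity in {0,1}². -/
theorem two_vertex_unique_admissible :
    ∃! Δ : Fin 2 → ℤ, (∀ i, Δ i = 0 ∨ Δ i = 1) ∧ admTwo n1 n2 Δ := by
  have hex : (myQ n1 n2 0 0 ∨ myQ n1 n2 0 1) ∨ (myQ n1 n2 1 0 ∨ myQ n1 n2 1 1) := by
    simp only [myQ, myT1, myT2, Int.even_iff]
    split_ifs <;> omega
  have huniq : ∀ d0 d1 d0' d1' : ℤ, (d0 = 0 ∨ d0 = 1) → (d1 = 0 ∨ d1 = 1) →
      (d0' = 0 ∨ d0' = 1) → (d1' = 0 ∨ d1' = 1) →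
      myQ n1 n2 d0 d1 → myQ n1 n2 d0' d1' → d0 = d0' ∧ d1 = d1' := by
    intro d0 d1 d0' d1' h0 h1 h0' h1' q q'
    simp only [myQ, myT1, myT2, Int.even_iff] at q q'
    rcases h0 with rfl|rfl <;> rcases h1 with rfl|rfl <;> rcases h0' with rfl|rfl <;>
      rcases h1' with rfl|rfl <;> split_ifs at q q' <;> omega
  have main : ∀ d0 d1 : ℤ, (d0 = 0 ∨ d0 = 1) → (d1 = 0 ∨ d1 = 1) → myQ n1 n2 d0 d1 →
      ∃! Δ : Fin 2 → ℤ, (∀ i, Δ i = 0 ∨ Δ i = 1) ∧ admTwo n1 n2 Δ := by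
    intro d0 d1 h0 h1 hq
    refine ⟨![d0, d1], ⟨?_, (adm_iff n1 n2 d0 d1).mpr hq⟩, ?_⟩
    · intro i; fin_cases i <;> simpa using by assumption
    · rintro Δ' ⟨hb, hadm⟩
      rw [eta_pair Δ'] at hadm
      rw [adm_iff] at hadm
      obtain ⟨e0, e1⟩ := huniq (Δ' 0) (Δ' 1) d0 d1 (hb 0) (hb 1) h0 h1 hadm hq
      rw [eta_pair Δ', e0, e1]
  rcases hex with (h|h)|(h|h)
  · exact main 0 0 (Or.inl rfl) (Or.inl rfl) h
  · exact main 0 1 (Or.inl rfl) (Or.inr rfl) h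
  · exact main 1 0 (Or.inr rfl) (Or.inl rfl) h
  · exact main 1 1 (Or.inr rfl) (Or.inr rfl) h

end TwoVertexTree
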